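/- Fix ε, α ∈ (0,1) and δ ≥ 0, and let T be the test that, on k observed action profiles, outputs YES if their empirical distribution s^k is a (δ + ε/2)-coarse correlated equilibrium and NO otherwise. If k > (8/ε²)(ln m + ln n − ln α), then T is an ε-test with error probability α for δ-coarse correlated equilibrium: for every distribution x ∈ Δ(A), if x is a δ-coarse correlated equilibrium then T outputs YES with probability at least 1 − α, and if x is not a (δ+ε)-coarse correlated equilibrium then T outputs NO with probability at least 1 − α (probabilities over k i.i.d. samples from x). -/

import Mathlib

open Finset

open scoped Classical

noncomputable section

/-- `x` is a probability distribution on the finite type `A`. -/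
def IsDist {A : Type*} [Fintype A] (x : A → ℝ) : Prop :=
  (∀ a, 0 ≤ x a) ∧ ∑ a, x a = 1

/-- Empirical distribution of `k` sampled elements of `A`. -/
def empJoint {A : Type*} [Fintype A] [DecidableEq A] (k : ℕ) (a : Fin k → A) : A → ℝ :=
  fun p => ((univ.filter fun t => a t = p).card : ℝ) / k

/-- Probability of the event `E` over `k` i.i.d. samples from the distribution `x`. -/
def PrJoint {A : Type*} [Fintype A] (k : ℕ) (x : A → ℝ) (E : (Fin k → A) → Prop) : ℝ :=
  ∑ a : Fin k → A, if E a then ∏ t, x (a t) else 0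

/-- `x ∈ Δ(A)` is an `ε`-coarse correlated equilibrium of the game `u`:
for every player `i` and action `j`, the expected regret for not playing `j`
is at most `ε`. -/
def IsCCE {n m : ℕ} (u : Fin n → (Fin n → Fin m) → ℝ)
    (x : (Fin n → Fin m) → ℝ) (ε : ℝ) : Prop :=
  ∀ (i : Fin n) (j : Fin m),
    ∑ a : Fin n → Fin m, x a * (u i (Function.update a i j) - u i a) ≤ ε

/-- `x ∈ Δ(A)` is an `ε`-correlated equilibrium of the game `u`:
for every player `i` and deviation map `f : [m] → [m]`, the expected regret is
at most `ε`. -/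
def IsCE {n m : ℕ} (u : Fin n → (Fin n → Fin m) → ℝ)
    (x : (Fin n → Fin m) → ℝ) (ε : ℝ) : Prop :=
  ∀ (i : Fin n) (f : Fin m → Fin m),
    ∑ a : Fin n → Fin m, x a * (u i (Function.update a i (f (a i))) - u i a) ≤ ε

/-- A distribution on a finite set is `k`-uniform if every probability is an integer
multiple of `1/k` (equivalently, it is uniform over a size-`k` multiset). -/
def IsKUniform {A : Type*} [Fintype A] (k : ℕ) (x : A → ℝ) : Prop :=
  ∀ a, ∃ c : ℕ, x a = (c : ℝ) / k
section Helpers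

variable {A : Type*} [Fintype A]

lemma key_ineq {p : ℝ} (hp0 : 0 ≤ p) (hp1 : p ≤ 1) {l : ℝ} (hl : 0 ≤ l) :
    1 - p + p * Real.exp l ≤ Real.exp (p * l + l ^ 2 / 8) := by
  have hD : ∀ t : ℝ, 0 < 1 - p + p * Real.exp t := by
    intro t
    rcases eq_or_lt_of_le hp0 with h | h
    · simp [← h]
    · nlinarith [Real.exp_pos t, mul_pos h (Real.exp_pos t)]
  have hden : ∀ t : ℝ, HasDerivAt (fun s => 1 - p + p * Real.exp s) (p * Real.exp t) t := by
    intro t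
    exact ((Real.hasDerivAt_exp t).const_mul p).const_add (1 - p)
  set G : ℝ → ℝ := fun t => p + t / 4 - p * Real.exp t / (1 - p + p * Real.exp t) with hGdef
  have hG : ∀ t : ℝ, HasDerivAt G
      (1 / 4 - (p * Real.exp t * (1 - p + p * Real.exp t) -
        p * Real.exp t * (p * Real.exp t)) / (1 - p + p * Real.exp t) ^ 2) t := by
    intro t
    have hq := ((Real.hasDerivAt_exp t).const_mul p).div (hden t) (hD t).ne'
    have hlin : HasDerivAt (fun s : ℝ => p + s / 4) (1 / 4) t :=
      ((hasDerivAt_id t).div_const 4).const_add p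
    exact hlin.sub hq
  have hGderiv_nonneg : ∀ t : ℝ, 0 ≤ (1 / 4 - (p * Real.exp t * (1 - p + p * Real.exp t) -
      p * Real.exp t * (p * Real.exp t)) / (1 - p + p * Real.exp t) ^ 2) := by
    intro t
    rw [sub_nonneg, div_le_iff₀ (pow_pos (hD t) 2)]
    nlinarith [sq_nonneg (1 - p - p * Real.exp t)]
  have hGmono : Monotone G :=
    monotone_of_deriv_nonneg (fun t => (hG t).differentiableAt)
      (fun t => by rw [(hG t).deriv]; exact hGderiv_nonneg t)
  have hG0 : G 0 = 0 := by simp [hGdef, Real.exp_zero]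
  have hGnonneg : ∀ t ∈ interior (Set.Ici (0:ℝ)), 0 ≤ G t := by
    intro t ht
    rw [interior_Ici] at ht
    rw [← hG0]
    exact hGmono (le_of_lt ht)
  set F : ℝ → ℝ := fun t => p * t + t ^ 2 / 8 - Real.log (1 - p + p * Real.exp t) with hFdef
  have hF : ∀ t : ℝ, HasDerivAt F (G t) t := by
    intro t
    have ha : HasDerivAt (fun s : ℝ => p * s) p t := by
      simpa using (hasDerivAt_id t).const_mul p
    have hb : HasDerivAt (fun s : ℝ => s ^ 2 / 8) (t / 4) t := by
      have := (hasDerivAt_pow 2 t).div_const 8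
      exact this.congr_deriv (by ring)
    have hc : HasDerivAt (fun s : ℝ => Real.log (1 - p + p * Real.exp s))
        (p * Real.exp t / (1 - p + p * Real.exp t)) t := (hden t).log (hD t).ne'
    exact (ha.add hb).sub hc
  have hFmono : MonotoneOn F (Set.Ici 0) := by
    apply monotoneOn_of_deriv_nonneg (convex_Ici 0)
    · exact (Differentiable.continuous (fun t => (hF t).differentiableAt)).continuousOn
    · exact (Differentiable.differentiableOn (fun t => (hF t).differentiableAt))
    · intro t ht
      rw [(hF t).deriv]
      exact hGnonneg t ht
  have hF0 : F 0 = 0 := by simp [hFdef]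
  have hFl : 0 ≤ F l := by
    rw [← hF0]
    exact hFmono Set.self_mem_Ici hl hl
  have : Real.log (1 - p + p * Real.exp l) ≤ p * l + l ^ 2 / 8 := by
    simp only [hFdef] at hFl; linarith
  exact (Real.log_le_iff_le_exp (hD l)).1 this

lemma PrJoint_total (k : ℕ) (x : A → ℝ) (hx : IsDist x) (E : (Fin k → A) → Prop) :
    PrJoint k x E + PrJoint k x (fun a => ¬ E a) = 1 := by
  have h2 : PrJoint k x E + PrJoint k x (fun a => ¬ E a) = ∑ a : Fin k → A, ∏ t, x (a t) := by
    unfold PrJoint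
    rw [← Finset.sum_add_distrib]
    exact Finset.sum_congr rfl fun a _ => by by_cases h : E a <;> simp [h]
  rw [h2, ← Fintype.sum_pow x k, hx.2, one_pow]

lemma PrJoint_mono (k : ℕ) (x : A → ℝ) (hx : ∀ a, 0 ≤ x a)
    {E F : (Fin k → A) → Prop} (h : ∀ a, E a → F a) :
    PrJoint k x E ≤ PrJoint k x F := by
  apply Finset.sum_le_sum
  intro a _
  by_cases hE : E a
  · rw [if_pos hE, if_pos (h a hE)]
  · rw [if_neg hE]
    split
    · exact Finset.prod_nonneg fun t _ => hx (a t)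
    · exact le_rfl

lemma PrJoint_union {B : Type*} [Fintype B] (k : ℕ) (x : A → ℝ) (hx : ∀ a, 0 ≤ x a)
    (E : B → (Fin k → A) → Prop) :
    PrJoint k x (fun a => ∃ b, E b a) ≤ ∑ b, PrJoint k x (fun a => E b a) := by
  unfold PrJoint
  rw [Finset.sum_comm]
  apply Finset.sum_le_sum
  intro a _
  have hnn : ∀ b : B, (0:ℝ) ≤ if E b a then ∏ t, x (a t) else 0 := by
    intro b
    split
    · exact Finset.prod_nonneg fun t _ => hx (a t)
    · exact le_rfl
  by_cases h : ∃ b, E b a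
  · rw [if_pos h]
    obtain ⟨b, hb⟩ := h
    have := Finset.single_le_sum (f := fun b => if E b a then ∏ t, x (a t) else 0)
      (fun b _ => hnn b) (mem_univ b)
    simpa [hb] using this
  · rw [if_neg h]
    exact Finset.sum_nonneg fun b _ => hnn b

lemma mgf_le (x : A → ℝ) (hx : IsDist x) (h : A → ℝ) (hh : ∀ p, 0 ≤ h p ∧ h p ≤ 1)
    (l : ℝ) (hl : 0 ≤ l) :
    ∑ p, x p * Real.exp (l * h p) ≤ Real.exp (l * (∑ p, x p * h p) + l ^ 2 / 8) := by
  set μ := ∑ p, x p * h p with hμdef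
  have hμ0 : 0 ≤ μ := Finset.sum_nonneg fun p _ => mul_nonneg (hx.1 p) (hh p).1
  have hμ1 : μ ≤ 1 := by
    have : μ ≤ ∑ p, x p := Finset.sum_le_sum fun p _ => by
      nlinarith [(hh p).2, hx.1 p, (hh p).1]
    rw [hx.2] at this; exact this
  have step1 : ∑ p, x p * Real.exp (l * h p) ≤ ∑ p, x p * ((1 - h p) + h p * Real.exp l) := by
    apply Finset.sum_le_sum
    intro p _
    apply mul_le_mul_of_nonneg_left _ (hx.1 p)
    have := convexOn_exp.2 (Set.mem_univ (0:ℝ)) (Set.mem_univ l)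
      (show (0:ℝ) ≤ 1 - h p by linarith [(hh p).2]) (hh p).1
      (show (1 - h p) + h p = 1 by ring)
    simp only [smul_eq_mul, mul_zero, zero_add, Real.exp_zero, mul_one] at this
    rw [mul_comm l (h p)]
    exact this
  have step2 : ∑ p, x p * ((1 - h p) + h p * Real.exp l) = 1 - μ + μ * Real.exp l := by
    have h2 : ∀ p, x p * ((1 - h p) + h p * Real.exp l)
        = x p - x p * h p + (x p * h p) * Real.exp l := fun p => by ring
    rw [Finset.sum_congr rfl fun p _ => h2 p, Finset.sum_add_distrib,
      Finset.sum_sub_distrib, hx.2, ← Finset.sum_mul, ← hμdef]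
  calc ∑ p, x p * Real.exp (l * h p) ≤ 1 - μ + μ * Real.exp l := by rw [← step2]; exact step1
    _ ≤ Real.exp (μ * l + l ^ 2 / 8) := key_ineq hμ0 hμ1 hl
    _ = Real.exp (l * μ + l ^ 2 / 8) := by rw [mul_comm μ l]

lemma chernoff01 (x : A → ℝ) (hx : IsDist x) (h : A → ℝ) (hh : ∀ p, 0 ≤ h p ∧ h p ≤ 1)
    (k : ℕ) (s : ℝ) (hs : 0 ≤ s) :
    PrJoint k x (fun a => (k:ℝ) * (∑ p, x p * h p) + (k:ℝ) * s ≤ ∑ t, h (a t))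
      ≤ Real.exp (-(2 * k * s ^ 2)) := by
  set μ := ∑ p, x p * h p with hμdef
  set l : ℝ := 4 * s with hldef
  set c : ℝ := (k:ℝ) * μ + (k:ℝ) * s with hcdef
  have hl : 0 ≤ l := by positivity
  have key : ∀ a : Fin k → A,
      (if (k:ℝ) * μ + (k:ℝ) * s ≤ ∑ t, h (a t) then ∏ t, x (a t) else 0)
      ≤ Real.exp (-(l * c)) * ∏ t, (x (a t) * Real.exp (l * h (a t))) := by
    intro a
    have hprod : ∏ t, (x (a t) * Real.exp (l * h (a t)))
        = (∏ t, x (a t)) * Real.exp (l * ∑ t, h (a t)) := by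
      rw [Finset.prod_mul_distrib, Finset.mul_sum, Real.exp_sum]
    have hxnn : 0 ≤ ∏ t, x (a t) := Finset.prod_nonneg fun t _ => hx.1 (a t)
    by_cases hE : (k:ℝ) * μ + (k:ℝ) * s ≤ ∑ t, h (a t)
    · rw [if_pos hE, hprod]
      have h1 : (1:ℝ) ≤ Real.exp (-(l * c)) * Real.exp (l * ∑ t, h (a t)) := by
        rw [← Real.exp_add]
        apply Real.one_le_exp
        have := mul_le_mul_of_nonneg_left hE hl
        rw [hcdef]
        nlinarith
      calc ∏ t, x (a t) = (∏ t, x (a t)) * 1 := by ring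
        _ ≤ (∏ t, x (a t)) * (Real.exp (-(l * c)) * Real.exp (l * ∑ t, h (a t))) :=
            mul_le_mul_of_nonneg_left h1 hxnn
        _ = Real.exp (-(l * c)) * ((∏ t, x (a t)) * Real.exp (l * ∑ t, h (a t))) := by ring
    · rw [if_neg hE]
      apply mul_nonneg (Real.exp_pos _).le
      exact Finset.prod_nonneg fun t _ => mul_nonneg (hx.1 (a t)) (Real.exp_pos _).le
  have hbase : 0 ≤ ∑ p, x p * Real.exp (l * h p) :=
    Finset.sum_nonneg fun p _ => mul_nonneg (hx.1 p) (Real.exp_pos _).le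
  calc PrJoint k x (fun a => (k:ℝ) * μ + (k:ℝ) * s ≤ ∑ t, h (a t))
      ≤ ∑ a : Fin k → A, Real.exp (-(l * c)) * ∏ t, (x (a t) * Real.exp (l * h (a t))) :=
        Finset.sum_le_sum fun a _ => key a
    _ = Real.exp (-(l * c)) * (∑ p, x p * Real.exp (l * h p)) ^ k := by
        rw [← Finset.mul_sum, Fintype.sum_pow]
    _ ≤ Real.exp (-(l * c)) * (Real.exp (l * μ + l ^ 2 / 8)) ^ k := by
        apply mul_le_mul_of_nonneg_left _ (Real.exp_pos _).le
        exact pow_le_pow_left₀ hbase (mgf_le x hx h hh l hl) k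
    _ = Real.exp (-(l * c) + (k:ℝ) * (l * μ + l ^ 2 / 8)) := by
        rw [← Real.exp_nat_mul, ← Real.exp_add]
    _ = Real.exp (-(2 * k * s ^ 2)) := by
        rw [hcdef, hldef]; ring_nf

lemma chernoff_pm (x : A → ℝ) (hx : IsDist x) (g : A → ℝ) (hg : ∀ p, -1 ≤ g p ∧ g p ≤ 1)
    (k : ℕ) (s : ℝ) (hs : 0 ≤ s) :
    PrJoint k x (fun a => (k:ℝ) * ((∑ p, x p * g p) + s) ≤ ∑ t, g (a t))
      ≤ Real.exp (-((k:ℝ) * s ^ 2 / 2)) := by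
  set h : A → ℝ := fun p => (g p + 1) / 2 with hhdef
  have hh : ∀ p, 0 ≤ h p ∧ h p ≤ 1 := fun p =>
    ⟨by simp only [hhdef]; linarith [(hg p).1], by simp only [hhdef]; linarith [(hg p).2]⟩
  have hμ : ∑ p, x p * h p = ((∑ p, x p * g p) + 1) / 2 := by
    have h2 : ∀ p, x p * h p = (x p * g p) / 2 + x p / 2 := fun p => by
      simp only [hhdef]; ring
    rw [Finset.sum_congr rfl fun p _ => h2 p, Finset.sum_add_distrib,
      ← Finset.sum_div, ← Finset.sum_div, hx.2]
    ring
  have himp : ∀ a : Fin k → A, ((k:ℝ) * ((∑ p, x p * g p) + s) ≤ ∑ t, g (a t)) →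
      ((k:ℝ) * (∑ p, x p * h p) + (k:ℝ) * (s / 2) ≤ ∑ t, h (a t)) := by
    intro a ha
    have hsum : ∑ t, h (a t) = ((∑ t, g (a t)) + (k:ℝ)) / 2 := by
      simp only [hhdef]
      rw [← Finset.sum_div, Finset.sum_add_distrib, Finset.sum_const, card_univ,
        Fintype.card_fin, nsmul_eq_mul, mul_one]
    rw [hμ, hsum]
    nlinarith
  calc PrJoint k x (fun a => (k:ℝ) * ((∑ p, x p * g p) + s) ≤ ∑ t, g (a t))
      ≤ PrJoint k x (fun a => (k:ℝ) * (∑ p, x p * h p) + (k:ℝ) * (s / 2) ≤ ∑ t, h (a t)) :=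
        PrJoint_mono k x hx.1 himp
    _ ≤ Real.exp (-(2 * k * (s / 2) ^ 2)) := chernoff01 x hx h hh k (s / 2) (by linarith)
    _ = Real.exp (-((k:ℝ) * s ^ 2 / 2)) := by ring_nf

lemma emp_sum {A : Type*} [Fintype A] [DecidableEq A] (k : ℕ) (hk : (0:ℝ) < k)
    (a : Fin k → A) (g : A → ℝ) :
    ∑ p, empJoint k a p * g p = (∑ t, g (a t)) / k := by
  rw [← Finset.sum_fiberwise' (univ : Finset (Fin k)) a g, Finset.sum_div]
  apply Finset.sum_congr rfl
  intro p _
  rw [Finset.sum_const, nsmul_eq_mul]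
  simp only [empJoint]
  ring

end Helpers

/-- The test that outputs YES iff the empirical distribution of the
`k` observed action profiles is a `(δ + ε/2)`-coarse correlated equilibrium is an
`ε`-test with error probability `α` for `δ`-coarse correlated equilibrium whenever
`k > (8/ε²)(ln m + ln n − ln α)`: if `x` is a `δ`-CCE the test answers YES with
probability ≥ `1 − α`; if `x` is not a `(δ+ε)`-CCE it answers NO with probability
≥ `1 − α`. -/
theorem stmt7 {n m : ℕ} (hn : 0 < n) (hm : 0 < m)
    (u : Fin n → (Fin n → Fin m) → ℝ)
    (hu : ∀ i a, 0 ≤ u i a ∧ u i a ≤ 1)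
    (ε α δ : ℝ) (hε : 0 < ε ∧ ε < 1) (hα : 0 < α ∧ α < 1) (hδ : 0 ≤ δ)
    (k : ℕ)
    (hk : (k : ℝ) > 8 / ε ^ 2 * (Real.log m + Real.log n - Real.log α)) :
    (∀ x : (Fin n → Fin m) → ℝ, IsDist x → IsCCE u x δ →
      PrJoint k x (fun a => IsCCE u (empJoint k a) (δ + ε / 2)) ≥ 1 - α) ∧
    (∀ x : (Fin n → Fin m) → ℝ, IsDist x → ¬ IsCCE u x (δ + ε) →
      PrJoint k x (fun a => ¬ IsCCE u (empJoint k a) (δ + ε / 2)) ≥ 1 - α) := by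
  have hε0 := hε.1
  have hm1 : (1:ℝ) ≤ (m:ℝ) := by exact_mod_cast hm
  have hn1 : (1:ℝ) ≤ (n:ℝ) := by exact_mod_cast hn
  have hnm1 : (1:ℝ) ≤ (n:ℝ) * m := by nlinarith
  have hlm : 0 ≤ Real.log m := Real.log_nonneg hm1
  have hln : 0 ≤ Real.log n := Real.log_nonneg hn1
  have hla : Real.log α < 0 := Real.log_neg hα.1 hα.2
  have hk0 : (0:ℝ) < k := by
    have h8 : (0:ℝ) < 8 / ε ^ 2 := by positivity
    nlinarith
  -- the exponential tail bound
  have hexp : Real.exp (-((k:ℝ) * (ε / 2) ^ 2 / 2)) ≤ α / ((n:ℝ) * m) := by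
    have hL : Real.log m + Real.log n - Real.log α < (k:ℝ) * (ε ^ 2 / 8) := by
      have h1 := mul_lt_mul_of_pos_right hk (show (0:ℝ) < ε ^ 2 / 8 by positivity)
      have heq : 8 / ε ^ 2 * (Real.log m + Real.log n - Real.log α) * (ε ^ 2 / 8)
          = Real.log m + Real.log n - Real.log α := by
        field_simp
      linarith [heq ▸ h1]
    have harg : -((k:ℝ) * (ε / 2) ^ 2 / 2) ≤ Real.log α - Real.log m - Real.log n := by
      have h2 : (k:ℝ) * (ε / 2) ^ 2 / 2 = (k:ℝ) * (ε ^ 2 / 8) := by ring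
      linarith
    calc Real.exp (-((k:ℝ) * (ε / 2) ^ 2 / 2))
        ≤ Real.exp (Real.log α - Real.log m - Real.log n) := Real.exp_le_exp.2 harg
      _ = α / ((n:ℝ) * m) := by
          rw [Real.exp_sub, Real.exp_sub, Real.exp_log hα.1,
            Real.exp_log (show (0:ℝ) < m by linarith), Real.exp_log (show (0:ℝ) < n by linarith),
            div_div, mul_comm (m:ℝ) (n:ℝ)]
  constructor
  · -- YES direction
    intro x hx hCCE
    have hbad : PrJoint k x (fun a => ¬ IsCCE u (empJoint k a) (δ + ε / 2)) ≤ α := by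
      set g : Fin n × Fin m → (Fin n → Fin m) → ℝ :=
        fun z p => u z.1 (Function.update p z.1 z.2) - u z.1 p with hgdef
      have hgb : ∀ z p, -1 ≤ g z p ∧ g z p ≤ 1 := by
        intro z p
        have h1 := hu z.1 (Function.update p z.1 z.2)
        have h2 := hu z.1 p
        constructor <;> simp only [hgdef] <;> [linarith; linarith]
      calc PrJoint k x (fun a => ¬ IsCCE u (empJoint k a) (δ + ε / 2))
          ≤ PrJoint k x (fun a => ∃ z : Fin n × Fin m,
              (k:ℝ) * ((∑ p, x p * g z p) + ε / 2) ≤ ∑ t, g z (a t)) := by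
            apply PrJoint_mono k x hx.1
            intro a ha
            rw [IsCCE] at ha; push_neg at ha
            obtain ⟨i, j, hij⟩ := ha
            refine ⟨(i, j), ?_⟩
            rw [emp_sum k hk0 a] at hij
            have hμ : (∑ p, x p * g (i, j) p) ≤ δ := hCCE i j
            have hS : (δ + ε / 2) * k < ∑ t, g (i, j) (a t) := (lt_div_iff₀ hk0).1 hij
            nlinarith
        _ ≤ ∑ z : Fin n × Fin m, PrJoint k x
              (fun a => (k:ℝ) * ((∑ p, x p * g z p) + ε / 2) ≤ ∑ t, g z (a t)) :=
            PrJoint_union k x hx.1 _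
        _ ≤ ∑ _z : Fin n × Fin m, Real.exp (-((k:ℝ) * (ε / 2) ^ 2 / 2)) :=
            Finset.sum_le_sum fun z _ => chernoff_pm x hx (g z) (hgb z) k (ε / 2) (by linarith)
        _ = ((n:ℝ) * m) * Real.exp (-((k:ℝ) * (ε / 2) ^ 2 / 2)) := by
            rw [Finset.sum_const, card_univ, nsmul_eq_mul]
            push_cast [Fintype.card_prod, Fintype.card_fin]
            ring
        _ ≤ ((n:ℝ) * m) * (α / ((n:ℝ) * m)) :=
            mul_le_mul_of_nonneg_left hexp (by positivity)
        _ = α := by field_simp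
    have htot := PrJoint_total k x hx (fun a => IsCCE u (empJoint k a) (δ + ε / 2))
    linarith
  · -- NO direction
    intro x hx hnC
    rw [IsCCE] at hnC; push_neg at hnC
    obtain ⟨i, j, hij⟩ := hnC
    set g : (Fin n → Fin m) → ℝ := fun p => u i p - u i (Function.update p i j) with hgdef
    have hgb : ∀ p, -1 ≤ g p ∧ g p ≤ 1 := by
      intro p
      have h1 := hu i (Function.update p i j)
      have h2 := hu i p
      constructor <;> simp only [hgdef] <;> [linarith; linarith]
    have hμ : ∑ p, x p * g p = -∑ p, x p * (u i (Function.update p i j) - u i p) := by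
      rw [← Finset.sum_neg_distrib]
      exact Finset.sum_congr rfl fun p _ => by simp only [hgdef]; ring
    have hyes : PrJoint k x (fun a => IsCCE u (empJoint k a) (δ + ε / 2)) ≤ α := by
      calc PrJoint k x (fun a => IsCCE u (empJoint k a) (δ + ε / 2))
          ≤ PrJoint k x (fun a => (k:ℝ) * ((∑ p, x p * g p) + ε / 2) ≤ ∑ t, g (a t)) := by
            apply PrJoint_mono k x hx.1
            intro a ha
            have h1 : ∑ p, empJoint k a p * (u i (Function.update p i j) - u i p)
                ≤ δ + ε / 2 := ha i j
            rw [emp_sum k hk0 a] at h1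
            have h3 : ∑ t, (u i (Function.update (a t) i j) - u i (a t)) ≤ (δ + ε / 2) * k :=
              (div_le_iff₀ hk0).1 h1
            have h2 : ∑ t, g (a t) = -∑ t, (u i (Function.update (a t) i j) - u i (a t)) := by
              rw [← Finset.sum_neg_distrib]
              exact Finset.sum_congr rfl fun t _ => by simp only [hgdef]; ring
            rw [h2, hμ]
            nlinarith
        _ ≤ Real.exp (-((k:ℝ) * (ε / 2) ^ 2 / 2)) :=
            chernoff_pm x hx g hgb k (ε / 2) (by linarith)
        _ ≤ α / ((n:ℝ) * m) := hexp
        _ ≤ α := div_le_self hα.1.le hnm1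
    have htot := PrJoint_total k x hx (fun a => IsCCE u (empJoint k a) (δ + ε / 2))
    linarith
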